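/- Let H be a vector space equipped with a nondecreasing family of norms ‖·‖_k (k ∈ ℕ) admitting smoothing operators: for each t > 1 there is a linear map S(t): H → H such that for all integers p > q ≥ 0 there are constants C_{p,q} > 0 with ‖S(t)f‖_p ≤ C_{p,q} t^{p−q} ‖f‖_q and ‖f − S(t)f‖_q ≤ C_{p,q} t^{q−p} ‖f‖_p for all f ∈ H. Then for all integers 0 ≤ l ≤ m ≤ n there exists a constant C > 0 such that for all f ∈ H: ‖f‖_m^{n−l} ≤ C · ‖f‖_n^{m−l} · ‖f‖_l^{n−m} (the interpolation inequality). -/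

import Mathlib

/-- A vector space with a nondecreasing family of norms admitting smoothing
operators satisfies the interpolation inequality
‖f‖_m^(n−l) ≤ C ‖f‖_n^(m−l) ‖f‖_l^(n−m) for l ≤ m ≤ n. -/
theorem stmt_2 (H : Type*) [AddCommGroup H] [Module ℝ H]
    (N : ℕ → H → ℝ)
    (hnonneg : ∀ k f, 0 ≤ N k f)
    (hnorm_add : ∀ k f g, N k (f + g) ≤ N k f + N k g)
    (hnorm_smul : ∀ k (c : ℝ) f, N k (c • f) = |c| * N k f)
    (hmono : ∀ (k k' : ℕ) f, k' ≤ k → N k' f ≤ N k f)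
    (S : ℝ → H →ₗ[ℝ] H)
    (C : ℕ → ℕ → ℝ)
    (hCpos : ∀ p q, 0 < C p q)
    (hS1 : ∀ t : ℝ, 1 < t → ∀ p q : ℕ, q < p → ∀ f,
      N p (S t f) ≤ C p q * t ^ (p - q) * N q f)
    (hS2 : ∀ t : ℝ, 1 < t → ∀ p q : ℕ, q < p → ∀ f,
      N q (f - S t f) ≤ C p q * t ^ (-((p : ℤ) - q)) * N p f) :
    ∀ l m n : ℕ, l ≤ m → m ≤ n →
      ∃ C' > (0 : ℝ), ∀ f : H,
        N m f ^ (n - l) ≤ C' * N n f ^ (m - l) * N l f ^ (n - m) := by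
  intro l m n hlm hmn
  rcases hlm.eq_or_lt with rfl | hlm'
  · exact ⟨1, one_pos, fun f => by simp⟩
  rcases hmn.eq_or_lt with rfl | hmn'
  · exact ⟨1, one_pos, fun f => by simp⟩
  -- main case l < m < n
  set a := m - l with ha
  set b := n - m with hb
  have hab : a + b = n - l := by omega
  have ha1 : 1 ≤ a := by omega
  have hb1 : 1 ≤ b := by omega
  set K := max (C m l) (C n m) with hK
  have hK0 : 0 < K := lt_max_of_lt_left (hCpos m l)
  refine ⟨max ((2*K)^(n-l)) 1, lt_of_lt_of_le one_pos (le_max_right _ _), fun f => ?_⟩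
  set A := N n f with hA
  set B := N l f with hB
  set M := N m f with hM
  have hA0 : 0 ≤ A := hnonneg n f
  have hB0 : 0 ≤ B := hnonneg l f
  have hM0 : 0 ≤ M := hnonneg m f
  have hMA : M ≤ A := hmono n m f hmn
  have hBM : B ≤ M := hmono m l f hlm
  have hkey : ∀ t : ℝ, 1 < t → M ≤ K * t ^ a * B + K * (t ^ b)⁻¹ * A := by
    intro t ht
    have ht0 : 0 < t := lt_trans one_pos ht
    have h1 : N m (S t f) ≤ C m l * t ^ a * B := hS1 t ht m l hlm' f
    have h2 : N m (f - S t f) ≤ C n m * t ^ (-((n:ℤ) - m)) * A := hS2 t ht n m hmn' f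
    have hz : (t : ℝ) ^ (-((n:ℤ) - m)) = (t ^ b)⁻¹ := by
      have e : -((n:ℤ) - m) = -(b : ℤ) := by
        have : (b : ℤ) = (n : ℤ) - m := by omega
        omega
      rw [e, zpow_neg, zpow_natCast]
    rw [hz] at h2
    have hMle : M ≤ N m (S t f) + N m (f - S t f) := by
      have h := hnorm_add m (S t f) (f - S t f)
      simpa using h
    have htb0 : 0 < t ^ b := pow_pos ht0 b
    have hta0 : 0 < t ^ a := pow_pos ht0 a
    calc M ≤ N m (S t f) + N m (f - S t f) := hMle
      _ ≤ C m l * t ^ a * B + C n m * (t ^ b)⁻¹ * A := add_le_add h1 h2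
      _ ≤ K * t ^ a * B + K * (t ^ b)⁻¹ * A := by
          gcongr
          · exact le_max_left _ _
          · exact le_max_right _ _
  have hBA : B ≤ A := le_trans hBM hMA
  rcases hB0.eq_or_lt with hB' | hB'
  · -- B = 0 : show M = 0
    have hMz : M = 0 := by
      by_contra h
      have hM0' : 0 < M := lt_of_le_of_ne hM0 (Ne.symm h)
      obtain ⟨t, htdef⟩ : ∃ t : ℝ, t = K * A / M + 2 := ⟨_, rfl⟩
      have hKA : 0 ≤ K * A / M := by positivity
      have ht : 1 < t := by rw [htdef]; linarith
      have ht0 : 0 < t := by linarith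
      have h1 := hkey t ht
      rw [← hB'] at h1
      have h2 : M ≤ K * (t ^ b)⁻¹ * A := by simpa using h1
      have htb : t ≤ t ^ b := le_self_pow₀ (by linarith) (by omega)
      have htb0 : 0 < t ^ b := pow_pos ht0 b
      have h3 : M * t ^ b ≤ K * A := by
        rw [mul_comm K (t ^ b)⁻¹, mul_assoc] at h2
        calc M * t ^ b ≤ ((t ^ b)⁻¹ * (K * A)) * t ^ b := by gcongr
          _ = K * A := by field_simp
      have h4 : M * t ≤ K * A := le_trans (by gcongr) h3
      have h5 : M * t = K * A + 2 * M := by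
        rw [htdef]; field_simp
      linarith
    rw [hMz, ← hB', zero_pow (by omega : n - l ≠ 0), zero_pow (by omega : b ≠ 0),
      mul_zero]
  rcases hBA.eq_or_lt with hAB | hAB
  · -- A = B : everything equal
    have h1 : M ^ (n - l) ≤ A ^ (n - l) := pow_le_pow_left₀ hM0 hMA _
    have h2 : A ^ (n - l) = A ^ a * B ^ b := by rw [← hab, pow_add, hAB]
    have h3 : (1:ℝ) ≤ max ((2*K)^(n-l)) 1 := le_max_right _ _
    have h4 : 0 ≤ A ^ a * B ^ b := by positivity
    nlinarith [h1, h2]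
  · -- B < A : choose t with t^(n-l) = A/B
    set t := (A / B) ^ (((n - l : ℕ) : ℝ))⁻¹ with htdef
    have hABpos : 0 < A / B := div_pos (lt_of_lt_of_le hB' hBA) hB'
    have hAB1 : 1 < A / B := (one_lt_div hB').2 hAB
    have ht : 1 < t := by
      rw [htdef, Real.one_lt_rpow_iff_of_pos hABpos]
      left
      constructor
      · exact hAB1
      · have : (0:ℝ) < ((n - l : ℕ) : ℝ) := by
          have : 0 < n - l := by omega
          exact_mod_cast this
        positivity
    have ht0 : 0 < t := lt_trans one_pos ht
    have htpow : t ^ (n - l) = A / B := by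
      rw [htdef]
      exact Real.rpow_inv_natCast_pow (le_of_lt hABpos) (by omega)
    have hAeq : A = t ^ (a + b) * B := by
      rw [hab, htpow]
      field_simp
    have e : K * (t ^ b)⁻¹ * A = K * t ^ a * B := by
      rw [hAeq, pow_add]
      have : (t : ℝ) ^ b ≠ 0 := (pow_pos ht0 b).ne'
      field_simp
    have hM2 : M ≤ 2 * K * t ^ a * B := by
      have h := hkey t ht
      rw [e] at h
      linarith
    have hrhs0 : 0 ≤ 2 * K * t ^ a * B := by positivity
    calc M ^ (n - l) ≤ (2 * K * t ^ a * B) ^ (n - l) := pow_le_pow_left₀ hM0 hM2 _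
      _ = (2*K)^(n-l) * (A/B) ^ a * B ^ (a + b) := by
          rw [mul_pow, mul_pow, ← pow_mul, mul_comm a (n-l), pow_mul, htpow, hab]
      _ = (2*K)^(n-l) * A ^ a * B ^ b := by
          rw [div_pow, pow_add]
          field_simp
      _ ≤ max ((2*K)^(n-l)) 1 * A ^ a * B ^ b := by
          have := le_max_left ((2*K)^(n-l)) 1
          have h1 : (0:ℝ) ≤ A ^ a := by positivity
          have h2 : (0:ℝ) ≤ B ^ b := by positivity
          exact mul_le_mul_of_nonneg_right (mul_le_mul_of_nonneg_right this h1) h2
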